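/- The population limit of the doubly robust control-component estimator satisfies θ̄₀ = E[μ₀Δ(X) | A=1] + E[ (μ₀Δ(X) − μ̄₀Δ(X)) · { (π̄_A(X)/(1−π̄_A(X))) / (π_A(X)/(1−π_A(X))) − 1 } | A=1 ], where θ̄₀ = E[ (A/P(A=1))·μ̄₀Δ(X) + ((1−A)/P(A=1))·(π̄_A(X)/(1−π̄_A(X)))·(Y₁ − Y₀ − μ̄₀Δ(X)) ]. -/

import Mathlib

open MeasureTheory
open scoped ENNReal NNReal

lemma aux_max_sub_max_neg (x : ℝ) : max x 0 - max (-x) 0 = x := by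
  rcases le_total 0 x with h | h
  · simp [max_eq_left h, max_eq_right (neg_nonpos.mpr h)]
  · simp [max_eq_right h, max_eq_left (neg_nonneg.mpr h)]

/-- Equality of pushforward with-density measures from equality of set integrals. -/
lemma aux_map_eq {Ω 𝒳 : Type*} [MeasurableSpace Ω] [MeasurableSpace 𝒳]
    (P : Measure Ω) (X : Ω → 𝒳) (hX : Measurable X) (f₁ f₂ : Ω → ℝ)
    (h0₁ : 0 ≤ᵐ[P] f₁) (h0₂ : 0 ≤ᵐ[P] f₂)
    (hi₁ : Integrable f₁ P) (hi₂ : Integrable f₂ P)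
    (heq : ∀ s : Set 𝒳, MeasurableSet s →
      ∫ ω in X ⁻¹' s, f₁ ω ∂P = ∫ ω in X ⁻¹' s, f₂ ω ∂P) :
    Measure.map X (P.withDensity fun ω => ENNReal.ofReal (f₁ ω))
      = Measure.map X (P.withDensity fun ω => ENNReal.ofReal (f₂ ω)) := by
  apply Measure.ext
  intro s hs
  rw [Measure.map_apply hX hs, Measure.map_apply hX hs,
    withDensity_apply _ (hX hs), withDensity_apply _ (hX hs),
    ← ofReal_integral_eq_lintegral_ofReal hi₁.restrict (ae_restrict_of_ae h0₁),
    ← ofReal_integral_eq_lintegral_ofReal hi₂.restrict (ae_restrict_of_ae h0₂),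
    heq s hs]

/-- Transfer of Bochner integrals through equal pushforward with-density measures. -/
lemma aux_smul_transfer {Ω 𝒳 : Type*} [MeasurableSpace Ω] [MeasurableSpace 𝒳]
    (P : Measure Ω) (X : Ω → 𝒳) (hX : Measurable X) (f₁ f₂ : Ω → ℝ)
    (hf₁ : Measurable f₁) (hf₂ : Measurable f₂)
    (h : Measure.map X (P.withDensity fun ω => ENNReal.ofReal (f₁ ω))
      = Measure.map X (P.withDensity fun ω => ENNReal.ofReal (f₂ ω)))
    (g : 𝒳 → ℝ) (hg : Measurable g) :
    ∫ ω, ((f₁ ω).toNNReal : ℝ) * g (X ω) ∂P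
      = ∫ ω, ((f₂ ω).toNNReal : ℝ) * g (X ω) ∂P := by
  have e₁ : ∫ ω, (f₁ ω).toNNReal • g (X ω) ∂P
      = ∫ x, g x ∂(Measure.map X (P.withDensity fun ω => ENNReal.ofReal (f₁ ω))) := by
    rw [integral_map hX.aemeasurable hg.aestronglyMeasurable]
    exact (integral_withDensity_eq_integral_smul hf₁.real_toNNReal fun ω => g (X ω)).symm
  have e₂ : ∫ ω, (f₂ ω).toNNReal • g (X ω) ∂P
      = ∫ x, g x ∂(Measure.map X (P.withDensity fun ω => ENNReal.ofReal (f₂ ω))) := by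
    rw [integral_map hX.aemeasurable hg.aestronglyMeasurable]
    exact (integral_withDensity_eq_integral_smul hf₂.real_toNNReal fun ω => g (X ω)).symm
  have := e₁.trans (by rw [h, ← e₂])
  simpa [NNReal.smul_def] using this

lemma aux_mul_transfer {Ω 𝒳 : Type*} [MeasurableSpace Ω] [MeasurableSpace 𝒳]
    (P : Measure Ω) (X : Ω → 𝒳) (hX : Measurable X) (f₁ f₂ : Ω → ℝ)
    (hf₁ : Measurable f₁) (hf₂ : Measurable f₂)
    (h0₁ : 0 ≤ᵐ[P] f₁) (h0₂ : 0 ≤ᵐ[P] f₂)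
    (h : Measure.map X (P.withDensity fun ω => ENNReal.ofReal (f₁ ω))
      = Measure.map X (P.withDensity fun ω => ENNReal.ofReal (f₂ ω)))
    (g : 𝒳 → ℝ) (hg : Measurable g) :
    ∫ ω, f₁ ω * g (X ω) ∂P = ∫ ω, f₂ ω * g (X ω) ∂P := by
  have key := aux_smul_transfer P X hX f₁ f₂ hf₁ hf₂ h g hg
  have c₁ : ∫ ω, f₁ ω * g (X ω) ∂P = ∫ ω, ((f₁ ω).toNNReal : ℝ) * g (X ω) ∂P := by
    refine integral_congr_ae ?_
    filter_upwards [h0₁] with ω hω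
    rw [Real.coe_toNNReal _ hω]
  have c₂ : ∫ ω, f₂ ω * g (X ω) ∂P = ∫ ω, ((f₂ ω).toNNReal : ℝ) * g (X ω) ∂P := by
    refine integral_congr_ae ?_
    filter_upwards [h0₂] with ω hω
    rw [Real.coe_toNNReal _ hω]
  rw [c₁, c₂, key]

lemma aux_lintegral_transfer {Ω 𝒳 : Type*} [MeasurableSpace Ω] [MeasurableSpace 𝒳]
    (P : Measure Ω) (X : Ω → 𝒳) (hX : Measurable X) (f₁ f₂ : Ω → ℝ)
    (hf₁ : Measurable f₁) (hf₂ : Measurable f₂)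
    (h : Measure.map X (P.withDensity fun ω => ENNReal.ofReal (f₁ ω))
      = Measure.map X (P.withDensity fun ω => ENNReal.ofReal (f₂ ω)))
    (g : 𝒳 → ℝ≥0∞) (hg : Measurable g) :
    ∫⁻ ω, ENNReal.ofReal (f₁ ω) * g (X ω) ∂P
      = ∫⁻ ω, ENNReal.ofReal (f₂ ω) * g (X ω) ∂P := by
  have e₁ := lintegral_withDensity_eq_lintegral_mul P
    (f := fun ω => ENNReal.ofReal (f₁ ω)) hf₁.ennreal_ofReal (hg.comp hX)
  have e₂ := lintegral_withDensity_eq_lintegral_mul P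
    (f := fun ω => ENNReal.ofReal (f₂ ω)) hf₂.ennreal_ofReal (hg.comp hX)
  have m₁ := lintegral_map hg hX
    (μ := P.withDensity fun ω => ENNReal.ofReal (f₁ ω))
  have m₂ := lintegral_map hg hX
    (μ := P.withDensity fun ω => ENNReal.ofReal (f₂ ω))
  calc ∫⁻ ω, ENNReal.ofReal (f₁ ω) * g (X ω) ∂P
      = ∫⁻ a, ((fun ω => ENNReal.ofReal (f₁ ω)) * (g ∘ X)) a ∂P := rfl
    _ = ∫⁻ a, (g ∘ X) a ∂(P.withDensity fun ω => ENNReal.ofReal (f₁ ω)) := e₁.symm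
    _ = ∫⁻ x, g x ∂(Measure.map X (P.withDensity fun ω => ENNReal.ofReal (f₁ ω))) := m₁.symm
    _ = ∫⁻ x, g x ∂(Measure.map X (P.withDensity fun ω => ENNReal.ofReal (f₂ ω))) := by rw [h]
    _ = ∫⁻ a, (g ∘ X) a ∂(P.withDensity fun ω => ENNReal.ofReal (f₂ ω)) := m₂
    _ = ∫⁻ a, ((fun ω => ENNReal.ofReal (f₂ ω)) * (g ∘ X)) a ∂P := e₂
    _ = ∫⁻ ω, ENNReal.ofReal (f₂ ω) * g (X ω) ∂P := rfl

/-- If the conditional expectation of `d` given `X` vanishes (in set-integral form), then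
`∫ g(X)·d = 0` for every measurable `g` making the product integrable. -/
lemma aux_key {Ω 𝒳 : Type*} [MeasurableSpace Ω] [MeasurableSpace 𝒳]
    (Q : Measure Ω) (X : Ω → 𝒳) (hX : Measurable X) (d : Ω → ℝ)
    (hd : Integrable d Q)
    (hset : ∀ s : Set 𝒳, MeasurableSet s → ∫ ω in X ⁻¹' s, d ω ∂Q = 0)
    (g : 𝒳 → ℝ) (hg : Measurable g)
    (hgd : Integrable (fun ω => g (X ω) * d ω) Q) :
    ∫ ω, g (X ω) * d ω ∂Q = 0 := by
  set d' : Ω → ℝ := hd.1.mk d with hd'def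
  have hdd' : d =ᵐ[Q] d' := hd.1.ae_eq_mk
  have hd'meas : Measurable d' := hd.1.stronglyMeasurable_mk.measurable
  have hd'i : Integrable d' Q := hd.congr hdd'
  have hgd' : Integrable (fun ω => g (X ω) * d' ω) Q :=
    hgd.congr (by filter_upwards [hdd'] with ω h; rw [h])
  -- the positive and negative parts of d' define the same measure on 𝒳
  have hmap : Measure.map X (Q.withDensity fun ω => ENNReal.ofReal (d' ω))
      = Measure.map X (Q.withDensity fun ω => ENNReal.ofReal (-d' ω)) := by
    apply Measure.ext
    intro s hs
    rw [Measure.map_apply hX hs, Measure.map_apply hX hs,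
      withDensity_apply _ (hX hs), withDensity_apply _ (hX hs)]
    have h0 : ∫ ω in X ⁻¹' s, d' ω ∂Q = 0 :=
      (integral_congr_ae (ae_restrict_of_ae hdd')).symm.trans (hset s hs)
    have hsplit := integral_eq_lintegral_pos_part_sub_lintegral_neg_part hd'i.restrict
      (μ := Q.restrict (X ⁻¹' s))
    rw [h0] at hsplit
    have hfin : ∀ (f : Ω → ℝ), (∀ ω, ENNReal.ofReal (f ω) ≤ (‖d' ω‖₊ : ℝ≥0∞)) →
        ∫⁻ ω in X ⁻¹' s, ENNReal.ofReal (f ω) ∂Q ≠ ⊤ := by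
      intro f hle
      refine ne_of_lt (lt_of_le_of_lt (lintegral_mono fun ω => hle ω) ?_)
      exact lt_of_le_of_lt (lintegral_mono' Measure.restrict_le_self le_rfl)
        hd'i.hasFiniteIntegral
    have ha := hfin d' fun ω => by
      rw [← enorm_eq_nnnorm, Real.enorm_eq_ofReal_abs]; exact ENNReal.ofReal_le_ofReal (le_abs_self _)
    have hb := hfin (fun ω => -d' ω) fun ω => by
      rw [← enorm_eq_nnnorm, Real.enorm_eq_ofReal_abs]; exact ENNReal.ofReal_le_ofReal (neg_le_abs _)
    have := sub_eq_zero.mp hsplit.symm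
    exact ((ENNReal.toReal_eq_toReal_iff' ha hb).mp this)
  have key := aux_smul_transfer Q X hX d' (fun ω => -d' ω) hd'meas hd'meas.neg hmap g hg
  -- integrability of the two halves
  have habs : ∀ (f : Ω → ℝ), (∀ ω, |f ω| ≤ |d' ω|) → Measurable f →
      Integrable (fun ω => ((f ω).toNNReal : ℝ) * g (X ω)) Q := by
    intro f hle hf
    refine hgd'.mono ((hf.real_toNNReal.coe_nnreal_real.mul (hg.comp hX)).aestronglyMeasurable)
      (Filter.Eventually.of_forall fun ω => ?_)
    have h1 : ((f ω).toNNReal : ℝ) = max (f ω) 0 := Real.coe_toNNReal' _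
    rw [Real.norm_eq_abs, Real.norm_eq_abs, abs_mul, abs_mul, h1, mul_comm]
    have h2 : |max (f ω) 0| ≤ |d' ω| := by
      rw [abs_of_nonneg (le_max_right _ _)]
      exact le_trans (max_le (le_abs_self _) (abs_nonneg _)) (hle ω)
    exact mul_le_mul_of_nonneg_left h2 (abs_nonneg _)
  have hi₁ := habs d' (fun ω => le_refl _) hd'meas
  have hi₂ := habs (fun ω => -d' ω) (fun ω => by rw [abs_neg]) hd'meas.neg
  have hsplit : ∫ ω, g (X ω) * d' ω ∂Q
      = ∫ ω, ((d' ω).toNNReal : ℝ) * g (X ω) ∂Q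
        - ∫ ω, (((-d' ω)).toNNReal : ℝ) * g (X ω) ∂Q := by
    rw [← integral_sub hi₁ hi₂]
    refine integral_congr_ae (Filter.Eventually.of_forall fun ω => ?_)
    show g (X ω) * d' ω
      = ((d' ω).toNNReal : ℝ) * g (X ω) - ((-d' ω).toNNReal : ℝ) * g (X ω)
    rw [Real.coe_toNNReal', Real.coe_toNNReal', ← sub_mul, aux_max_sub_max_neg, mul_comm]
  have : ∫ ω, g (X ω) * d ω ∂Q = ∫ ω, g (X ω) * d' ω ∂Q :=
    integral_congr_ae (by filter_upwards [hdd'] with ω h; rw [h])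
  rw [this, hsplit, key, sub_self]


/-- **Population limit of the doubly robust control component.**  For arbitrary bounded
candidate functions `μ̄₀Δ` and `π̄_A` (with `ε ≤ π̄_A < 1`), the limit
`θ̄₀ = E[(A/P(A=1))·μ̄₀Δ(X) + ((1-A)/P(A=1))·(π̄_A(X)/(1-π̄_A(X)))·(Y₁-Y₀-μ̄₀Δ(X))]`
satisfies
`θ̄₀ = E[μ₀Δ(X)|A=1] + E[(μ₀Δ(X)-μ̄₀Δ(X))·{(π̄_A/(1-π̄_A))/(π_A/(1-π_A)) - 1}|A=1]`,
conditional expectations given the event `A=1` being `E[·;A=1]/P(A=1)`. -/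
theorem control_component_population_limit
    {Ω 𝒳 : Type*} [MeasurableSpace Ω] [MeasurableSpace 𝒳]
    (P : Measure Ω) [IsProbabilityMeasure P]
    (A : Ω → ℝ) (X : Ω → 𝒳) (Y0 Y1 : Ω → ℝ) (πA μ0Δ πb μb : 𝒳 → ℝ) (ε : ℝ)
    (hε : 0 < ε)
    (hA01 : ∀ ω, A ω = 0 ∨ A ω = 1)
    (hAmeas : Measurable A) (hXmeas : Measurable X)
    (hπmeas : Measurable πA) (hμmeas : Measurable μ0Δ)
    (hπbmeas : Measurable πb) (hμbmeas : Measurable μb)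
    (hPA : 0 < (P {ω | A ω = 1}).toReal)
    (hπbd : ∀ᵐ ω ∂P, ε ≤ πA (X ω) ∧ πA (X ω) < 1)
    (hπbbd : ∀ᵐ ω ∂P, ε ≤ πb (X ω) ∧ πb (X ω) < 1)
    (hμbbd : ∃ C : ℝ, ∀ x, |μb x| ≤ C)
    (hπdef : ∀ s : Set 𝒳, MeasurableSet s →
      ∫ ω in {ω | X ω ∈ s}, A ω ∂P = ∫ ω in {ω | X ω ∈ s}, πA (X ω) ∂P)
    (hμdef : ∀ s : Set 𝒳, MeasurableSet s →
      ∫ ω in {ω | X ω ∈ s ∧ A ω = 0}, (Y1 ω - Y0 ω) ∂P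
        = ∫ ω in {ω | X ω ∈ s ∧ A ω = 0}, μ0Δ (X ω) ∂P)
    (hint : Integrable (fun ω =>
      (A ω / (P {ω | A ω = 1}).toReal) * μb (X ω)
        + ((1 - A ω) / (P {ω | A ω = 1}).toReal) * (πb (X ω) / (1 - πb (X ω)))
          * ((Y1 ω - Y0 ω) - μb (X ω))) P)
    (hintμ0 : Integrable (fun ω => μ0Δ (X ω)) P)
    (hintcorr : Integrable (fun ω => (μ0Δ (X ω) - μb (X ω)) *
      ((πb (X ω) / (1 - πb (X ω))) / (πA (X ω) / (1 - πA (X ω))) - 1)) P) :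
    ∫ ω, ((A ω / (P {ω | A ω = 1}).toReal) * μb (X ω)
        + ((1 - A ω) / (P {ω | A ω = 1}).toReal) * (πb (X ω) / (1 - πb (X ω)))
          * ((Y1 ω - Y0 ω) - μb (X ω))) ∂P
      = (∫ ω in {ω | A ω = 1}, μ0Δ (X ω) ∂P) / (P {ω | A ω = 1}).toReal
        + (∫ ω in {ω | A ω = 1}, (μ0Δ (X ω) - μb (X ω)) *
            ((πb (X ω) / (1 - πb (X ω))) / (πA (X ω) / (1 - πA (X ω))) - 1) ∂P)
          / (P {ω | A ω = 1}).toReal := by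
  classical
  obtain ⟨Cb, hCb⟩ := hμbbd
  set c : ℝ := (P {ω | A ω = 1}).toReal with hc_def
  have hc : 0 < c := hPA
  have hc0 : c ≠ 0 := ne_of_gt hc
  have hA_mem : ∀ ω, 0 ≤ A ω ∧ A ω ≤ 1 := fun ω => by
    rcases hA01 ω with h | h <;> simp [h]
  have hA1s : MeasurableSet {ω | A ω = 1} := hAmeas (measurableSet_singleton 1)
  have hA0s : MeasurableSet {ω | A ω = 0} := hAmeas (measurableSet_singleton 0)
  -- measurability on 𝒳
  have hrb : Measurable fun x => πb x / (1 - πb x) :=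
    hπbmeas.div (measurable_const.sub hπbmeas)
  have hr : Measurable fun x => πA x / (1 - πA x) :=
    hπmeas.div (measurable_const.sub hπmeas)
  have hm : Measurable fun x => μ0Δ x - μb x := hμmeas.sub hμbmeas
  have hq : Measurable fun x => (πb x / (1 - πb x)) / (πA x / (1 - πA x)) := hrb.div hr
  have hu : Measurable fun x =>
      (μ0Δ x - μb x) * ((πb x / (1 - πb x)) / (πA x / (1 - πA x))) := hm.mul hq
  have hv : Measurable fun x =>
      (μ0Δ x - μb x) * ((πb x / (1 - πb x)) / (πA x / (1 - πA x)) - 1) :=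
    hm.mul (hq.sub measurable_const)
  have hw : Measurable fun x => (πb x / (1 - πb x)) * (μ0Δ x - μb x) := hrb.mul hm
  -- basic integrability
  have int_A : Integrable A P := by
    refine (integrable_const (1:ℝ)).mono' hAmeas.aestronglyMeasurable
      (Filter.Eventually.of_forall fun ω => ?_)
    rw [Real.norm_eq_abs, abs_of_nonneg (hA_mem ω).1]; exact (hA_mem ω).2
  have int_1A : Integrable (fun ω => 1 - A ω) P := (integrable_const 1).sub int_A
  have int_π : Integrable (fun ω => πA (X ω)) P := by
    refine (integrable_const (1:ℝ)).mono' (hπmeas.comp hXmeas).aestronglyMeasurable ?_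
    filter_upwards [hπbd] with ω hω
    rw [Real.norm_eq_abs, abs_of_nonneg (le_trans (le_of_lt hε) hω.1)]
    exact le_of_lt hω.2
  have int_1π : Integrable (fun ω => 1 - πA (X ω)) P := (integrable_const 1).sub int_π
  have int_μb : Integrable (fun ω => μb (X ω)) P :=
    (integrable_const Cb).mono' (hμbmeas.comp hXmeas).aestronglyMeasurable
      (Filter.Eventually.of_forall fun ω => by rw [Real.norm_eq_abs]; exact hCb (X ω))
  have int_m : Integrable (fun ω => μ0Δ (X ω) - μb (X ω)) P := hintμ0.sub int_μb
  have int_u : Integrable (fun ω => (μ0Δ (X ω) - μb (X ω)) *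
      ((πb (X ω) / (1 - πb (X ω))) / (πA (X ω) / (1 - πA (X ω))))) P :=
    (hintcorr.add int_m).congr (Filter.Eventually.of_forall fun ω => by
      simp only [Pi.add_apply]; ring)
  have int_Aμb : Integrable (fun ω => A ω * μb (X ω)) P :=
    int_μb.bdd_mul (c := 1) hAmeas.aestronglyMeasurable (Filter.Eventually.of_forall fun ω => by
      rw [Real.norm_eq_abs, abs_of_nonneg (hA_mem ω).1]; exact (hA_mem ω).2)
  have int_1Aμb : Integrable (fun ω => (1 - A ω) * μb (X ω)) P :=
    int_μb.bdd_mul (c := 1) (measurable_const.sub hAmeas).aestronglyMeasurable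
      (Filter.Eventually.of_forall fun ω => by
        rw [Real.norm_eq_abs, abs_of_nonneg (by linarith [(hA_mem ω).2])]
        linarith [(hA_mem ω).1])
  have int_h1 : Integrable (fun ω =>
      (1 - A ω) * (πb (X ω) / (1 - πb (X ω))) * (Y1 ω - Y0 ω - μb (X ω))) P := by
    refine ((hint.const_mul c).sub int_Aμb).congr
      (Filter.Eventually.of_forall fun ω => ?_)
    simp only [Pi.sub_apply]
    have e1 : A ω / c * c = A ω := div_mul_cancel₀ _ hc0
    have e2 : (1 - A ω) / c * c = 1 - A ω := div_mul_cancel₀ _ hc0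
    linear_combination μb (X ω) * e1
      + (πb (X ω) / (1 - πb (X ω)) * (Y1 ω - Y0 ω - μb (X ω))) * e2
  have hA_nn : 0 ≤ᵐ[P] A := Filter.Eventually.of_forall fun ω => by
    simp only [Pi.zero_apply]; exact (hA_mem ω).1
  have hπ_nn : 0 ≤ᵐ[P] fun ω => πA (X ω) := by
    filter_upwards [hπbd] with ω hω
    simp only [Pi.zero_apply]; linarith [hω.1, hε]
  have h1A_nn : 0 ≤ᵐ[P] fun ω => 1 - A ω := Filter.Eventually.of_forall fun ω => by
    simp only [Pi.zero_apply]; linarith [(hA_mem ω).2]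
  have h1π_nn : 0 ≤ᵐ[P] fun ω => 1 - πA (X ω) := by
    filter_upwards [hπbd] with ω hω
    simp only [Pi.zero_apply]; linarith [hω.2]
  -- measure equalities (pushforward of with-density measures)
  have hmap1 : Measure.map X (P.withDensity fun ω => ENNReal.ofReal (A ω))
      = Measure.map X (P.withDensity fun ω => ENNReal.ofReal (πA (X ω))) := by
    refine aux_map_eq P X hXmeas A (fun ω => πA (X ω)) hA_nn hπ_nn
      int_A int_π (fun s hs => hπdef s hs)
  have hmap2 : Measure.map X (P.withDensity fun ω => ENNReal.ofReal (1 - A ω))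
      = Measure.map X (P.withDensity fun ω => ENNReal.ofReal (1 - πA (X ω))) := by
    refine aux_map_eq P X hXmeas (fun ω => 1 - A ω) (fun ω => 1 - πA (X ω)) h1A_nn h1π_nn
      int_1A int_1π (fun s hs => ?_)
    have h1 : ∫ ω in X ⁻¹' s, A ω ∂P = ∫ ω in X ⁻¹' s, πA (X ω) ∂P := hπdef s hs
    rw [integral_sub (integrable_const 1).restrict int_A.restrict,
      integral_sub (integrable_const 1).restrict int_π.restrict, h1]
  -- Bochner transfers
  have S_D : ∫ ω, A ω * μb (X ω) ∂P = ∫ ω, πA (X ω) * μb (X ω) ∂P :=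
    aux_mul_transfer P X hXmeas A (fun ω => πA (X ω)) hAmeas (hπmeas.comp hXmeas) hA_nn hπ_nn hmap1 μb hμbmeas
  have S_μ0 : ∫ ω, A ω * μ0Δ (X ω) ∂P = ∫ ω, πA (X ω) * μ0Δ (X ω) ∂P :=
    aux_mul_transfer P X hXmeas A (fun ω => πA (X ω)) hAmeas (hπmeas.comp hXmeas) hA_nn hπ_nn hmap1 μ0Δ hμmeas
  have S_v : ∫ ω, A ω * ((μ0Δ (X ω) - μb (X ω)) *
        ((πb (X ω) / (1 - πb (X ω))) / (πA (X ω) / (1 - πA (X ω))) - 1)) ∂P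
      = ∫ ω, πA (X ω) * ((μ0Δ (X ω) - μb (X ω)) *
        ((πb (X ω) / (1 - πb (X ω))) / (πA (X ω) / (1 - πA (X ω))) - 1)) ∂P :=
    aux_mul_transfer P X hXmeas A (fun ω => πA (X ω)) hAmeas (hπmeas.comp hXmeas) hA_nn hπ_nn hmap1 _ hv
  have S_B : ∫ ω, (1 - A ω) * ((πb (X ω) / (1 - πb (X ω))) * (μ0Δ (X ω) - μb (X ω))) ∂P
      = ∫ ω, (1 - πA (X ω)) * ((πb (X ω) / (1 - πb (X ω))) * (μ0Δ (X ω) - μb (X ω))) ∂P :=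
    aux_mul_transfer P X hXmeas (fun ω => 1 - A ω) (fun ω => 1 - πA (X ω)) (measurable_const.sub hAmeas)
      (measurable_const.sub (hπmeas.comp hXmeas)) h1A_nn h1π_nn hmap2 _ hw
  -- integrability of (1-A)·rb(X)·(μ0Δ-μb)(X)
  have int_Aw : Integrable (fun ω =>
      (1 - A ω) * ((πb (X ω) / (1 - πb (X ω))) * (μ0Δ (X ω) - μb (X ω)))) P := by
    constructor
    · exact ((measurable_const.sub hAmeas).mul (hw.comp hXmeas)).aestronglyMeasurable
    · show ∫⁻ ω, (‖(1 - A ω) *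
        ((πb (X ω) / (1 - πb (X ω))) * (μ0Δ (X ω) - μb (X ω)))‖₊ : ℝ≥0∞) ∂P < ⊤
      have e1 : ∀ᵐ ω ∂P, (‖(1 - A ω) *
          ((πb (X ω) / (1 - πb (X ω))) * (μ0Δ (X ω) - μb (X ω)))‖₊ : ℝ≥0∞)
          = ENNReal.ofReal (1 - A ω) *
            ENNReal.ofReal |(πb (X ω) / (1 - πb (X ω))) * (μ0Δ (X ω) - μb (X ω))| := by
        refine Filter.Eventually.of_forall fun ω => ?_
        rw [← enorm_eq_nnnorm, Real.enorm_eq_ofReal_abs, abs_mul,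
          abs_of_nonneg (by linarith [(hA_mem ω).2] : (0:ℝ) ≤ 1 - A ω),
          ENNReal.ofReal_mul (by linarith [(hA_mem ω).2])]
      rw [lintegral_congr_ae e1]
      have e2 := aux_lintegral_transfer P X hXmeas (fun ω => 1 - A ω) (fun ω => 1 - πA (X ω)) (measurable_const.sub hAmeas)
        (measurable_const.sub (hπmeas.comp hXmeas)) hmap2
        (fun x => ENNReal.ofReal |(πb x / (1 - πb x)) * (μ0Δ x - μb x)|)
        hw.abs.ennreal_ofReal
      rw [e2]
      have e3 : ∀ᵐ ω ∂P, ENNReal.ofReal (1 - πA (X ω)) *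
          ENNReal.ofReal |(πb (X ω) / (1 - πb (X ω))) * (μ0Δ (X ω) - μb (X ω))|
          ≤ (‖(μ0Δ (X ω) - μb (X ω)) *
            ((πb (X ω) / (1 - πb (X ω))) / (πA (X ω) / (1 - πA (X ω))))‖₊ : ℝ≥0∞) := by
        filter_upwards [hπbd, hπbbd] with ω h1 h2
        rw [← enorm_eq_nnnorm, Real.enorm_eq_ofReal_abs,
          ← ENNReal.ofReal_mul (by linarith [h1.2] : (0:ℝ) ≤ 1 - πA (X ω))]
        apply ENNReal.ofReal_le_ofReal
        have hπ0 : (0:ℝ) < πA (X ω) := lt_of_lt_of_le hε h1.1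
        have hπ1 : πA (X ω) < 1 := h1.2
        have hπb1 : (0:ℝ) < 1 - πb (X ω) := by linarith [h2.2]
        have key : (1 - πA (X ω)) *
            ((πb (X ω) / (1 - πb (X ω))) * (μ0Δ (X ω) - μb (X ω)))
            = πA (X ω) * ((μ0Δ (X ω) - μb (X ω)) *
              ((πb (X ω) / (1 - πb (X ω))) / (πA (X ω) / (1 - πA (X ω))))) := by
          field_simp
        calc (1 - πA (X ω)) * |(πb (X ω) / (1 - πb (X ω))) * (μ0Δ (X ω) - μb (X ω))|
            = |(1 - πA (X ω)) * ((πb (X ω) / (1 - πb (X ω))) * (μ0Δ (X ω) - μb (X ω)))| := by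
              rw [abs_mul (1 - πA (X ω)),
                abs_of_nonneg (by linarith : (0:ℝ) ≤ 1 - πA (X ω))]
          _ = |πA (X ω) * ((μ0Δ (X ω) - μb (X ω)) *
              ((πb (X ω) / (1 - πb (X ω))) / (πA (X ω) / (1 - πA (X ω)))))| := by rw [key]
          _ = πA (X ω) * |(μ0Δ (X ω) - μb (X ω)) *
              ((πb (X ω) / (1 - πb (X ω))) / (πA (X ω) / (1 - πA (X ω))))| := by
              rw [abs_mul, abs_of_pos hπ0]
          _ ≤ 1 * |(μ0Δ (X ω) - μb (X ω)) *
              ((πb (X ω) / (1 - πb (X ω))) / (πA (X ω) / (1 - πA (X ω))))| :=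
              mul_le_mul_of_nonneg_right (le_of_lt hπ1) (abs_nonneg _)
          _ = |(μ0Δ (X ω) - μb (X ω)) *
              ((πb (X ω) / (1 - πb (X ω))) / (πA (X ω) / (1 - πA (X ω))))| := one_mul _
      exact lt_of_le_of_lt (lintegral_mono_ae e3) int_u.2
  -- integrability of (1-A)·(Y1-Y0-μb(X))
  have int_k0 : Integrable (fun ω => (1 - A ω) * (Y1 ω - Y0 ω - μb (X ω))) P := by
    have haesm : AEStronglyMeasurable (fun ω => (1 - A ω) * (Y1 ω - Y0 ω - μb (X ω))) P := by
      have h := int_h1.1.mul ((hrb.comp hXmeas).inv.aestronglyMeasurable)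
      refine h.congr ?_
      filter_upwards [hπbbd] with ω hω
      have h1 : (0:ℝ) < πb (X ω) := lt_of_lt_of_le hε hω.1
      have h2 : (0:ℝ) < 1 - πb (X ω) := by linarith [hω.2]
      have hrb0 : πb (X ω) / (1 - πb (X ω)) ≠ 0 := ne_of_gt (div_pos h1 h2)
      show (1 - A ω) * (πb (X ω) / (1 - πb (X ω))) * (Y1 ω - Y0 ω - μb (X ω)) *
          (πb (X ω) / (1 - πb (X ω)))⁻¹ = (1 - A ω) * (Y1 ω - Y0 ω - μb (X ω))
      field_simp
    refine (int_h1.norm.const_mul ε⁻¹).mono' haesm ?_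
    filter_upwards [hπbbd] with ω hω
    rcases hA01 ω with h | h
    · have h1 : (0:ℝ) < πb (X ω) := lt_of_lt_of_le hε hω.1
      have h2 : (0:ℝ) < 1 - πb (X ω) := by linarith [hω.2]
      have hrbε : ε ≤ πb (X ω) / (1 - πb (X ω)) := by
        rw [le_div_iff₀ h2]
        nlinarith [hω.1, hω.2, hε]
      simp only [h, sub_zero, one_mul, Real.norm_eq_abs]
      rw [abs_mul, abs_of_pos (div_pos h1 h2)]
      calc |Y1 ω - Y0 ω - μb (X ω)| = ε⁻¹ * (ε * |Y1 ω - Y0 ω - μb (X ω)|) := by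
            rw [inv_mul_cancel_left₀ (ne_of_gt hε)]
        _ ≤ ε⁻¹ * (πb (X ω) / (1 - πb (X ω)) * |Y1 ω - Y0 ω - μb (X ω)|) := by
            have := mul_le_mul_of_nonneg_right hrbε (abs_nonneg (Y1 ω - Y0 ω - μb (X ω)))
            have hin : (0:ℝ) ≤ ε⁻¹ := inv_nonneg.mpr (le_of_lt hε)
            exact mul_le_mul_of_nonneg_left this hin
    · simp only [h, sub_self, zero_mul, norm_zero]
      positivity
  have int_1AY : Integrable (fun ω => (1 - A ω) * (Y1 ω - Y0 ω)) P :=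
    (int_k0.add int_1Aμb).congr (Filter.Eventually.of_forall fun ω => by
      simp only [Pi.add_apply]; ring)
  have int_Am : Integrable (fun ω => (1 - A ω) * (μ0Δ (X ω) - μb (X ω))) P :=
    int_m.bdd_mul (c := 1) (measurable_const.sub hAmeas).aestronglyMeasurable
      (Filter.Eventually.of_forall fun ω => by
        rw [Real.norm_eq_abs, abs_of_nonneg (by linarith [(hA_mem ω).2])]
        linarith [(hA_mem ω).1])
  have hd_int : Integrable (fun ω => (1 - A ω) * ((Y1 ω - Y0 ω) - μ0Δ (X ω))) P :=
    (int_k0.sub int_Am).congr (Filter.Eventually.of_forall fun ω => by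
      simp only [Pi.sub_apply]; ring)
  -- set-integral hypothesis for the trend
  have hset_d : ∀ s : Set 𝒳, MeasurableSet s →
      ∫ ω in X ⁻¹' s, (1 - A ω) * ((Y1 ω - Y0 ω) - μ0Δ (X ω)) ∂P = 0 := by
    intro s hs
    have hd_pt : ∀ ω, (1 - A ω) * ((Y1 ω - Y0 ω) - μ0Δ (X ω))
        = Set.indicator {ω' | A ω' = 0} (fun ω' => (Y1 ω' - Y0 ω') - μ0Δ (X ω')) ω := by
      intro ω
      rcases hA01 ω with h | h
      · rw [Set.indicator_of_mem (show ω ∈ {ω' | A ω' = 0} from h), h]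
        ring
      · rw [Set.indicator_of_notMem
          (show ω ∉ {ω' | A ω' = 0} by simp [Set.mem_setOf_eq, h]), h]
        ring
    have hTmeas : MeasurableSet (X ⁻¹' s ∩ {ω | A ω = 0}) := (hXmeas hs).inter hA0s
    have int_YT : Integrable (fun ω => Y1 ω - Y0 ω)
        (P.restrict (X ⁻¹' s ∩ {ω | A ω = 0})) := by
      refine (int_1AY.restrict).congr ?_
      filter_upwards [ae_restrict_mem hTmeas] with ω hω
      have h0 : A ω = 0 := hω.2
      show (1 - A ω) * (Y1 ω - Y0 ω) = Y1 ω - Y0 ω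
      rw [h0]; ring
    simp only [hd_pt]
    rw [setIntegral_indicator hA0s]
    rw [integral_sub int_YT hintμ0.restrict]
    have h2 := hμdef s hs
    rw [show {ω | X ω ∈ s ∧ A ω = 0} = X ⁻¹' s ∩ {ω | A ω = 0} from rfl] at h2
    rw [h2, sub_self]
  have hgd : Integrable (fun ω => (πb (X ω) / (1 - πb (X ω))) *
      ((1 - A ω) * ((Y1 ω - Y0 ω) - μ0Δ (X ω)))) P :=
    (int_h1.sub int_Aw).congr (Filter.Eventually.of_forall fun ω => by
      simp only [Pi.sub_apply]; ring)
  have S_key := aux_key P X hXmeas _ hd_int hset_d _ hrb hgd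
  have S_A : ∫ ω, (1 - A ω) * (πb (X ω) / (1 - πb (X ω))) * (Y1 ω - Y0 ω - μb (X ω)) ∂P
      = ∫ ω, (1 - A ω) * ((πb (X ω) / (1 - πb (X ω))) * (μ0Δ (X ω) - μb (X ω))) ∂P := by
    have h0 : ∫ ω, ((1 - A ω) * (πb (X ω) / (1 - πb (X ω))) * (Y1 ω - Y0 ω - μb (X ω))
        - (1 - A ω) * ((πb (X ω) / (1 - πb (X ω))) * (μ0Δ (X ω) - μb (X ω)))) ∂P = 0 := by
      rw [← S_key]
      refine integral_congr_ae (Filter.Eventually.of_forall fun ω => ?_)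
      beta_reduce
      ring
    rw [integral_sub int_h1 int_Aw] at h0
    linarith
  -- step C
  have S_C : ∫ ω, (1 - πA (X ω)) * ((πb (X ω) / (1 - πb (X ω))) * (μ0Δ (X ω) - μb (X ω))) ∂P
      = ∫ ω, πA (X ω) * ((μ0Δ (X ω) - μb (X ω)) *
        ((πb (X ω) / (1 - πb (X ω))) / (πA (X ω) / (1 - πA (X ω))))) ∂P := by
    refine integral_congr_ae ?_
    filter_upwards [hπbd, hπbbd] with ω h1 h2
    have hπ0 : πA (X ω) ≠ 0 := ne_of_gt (lt_of_lt_of_le hε h1.1)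
    have hπ1 : (1:ℝ) - πA (X ω) ≠ 0 := ne_of_gt (by linarith [h1.2])
    have hπb1 : (1:ℝ) - πb (X ω) ≠ 0 := ne_of_gt (by linarith [h2.2])
    field_simp
  -- integrability of π·u and π·m and π·μ0
  have int_πu : Integrable (fun ω => πA (X ω) * ((μ0Δ (X ω) - μb (X ω)) *
      ((πb (X ω) / (1 - πb (X ω))) / (πA (X ω) / (1 - πA (X ω)))))) P := by
    refine int_u.mono ((hπmeas.comp hXmeas).mul (hu.comp hXmeas)).aestronglyMeasurable ?_
    filter_upwards [hπbd] with ω hω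
    rw [Real.norm_eq_abs, Real.norm_eq_abs, abs_mul]
    have h1 : |πA (X ω)| ≤ 1 := by
      rw [abs_of_pos (lt_of_lt_of_le hε hω.1)]; exact le_of_lt hω.2
    exact le_trans (mul_le_mul_of_nonneg_right h1 (abs_nonneg _)) (le_of_eq (one_mul _))
  have int_πm : Integrable (fun ω => πA (X ω) * (μ0Δ (X ω) - μb (X ω))) P :=
    int_m.bdd_mul (c := 1) (hπmeas.comp hXmeas).aestronglyMeasurable
      (by filter_upwards [hπbd] with ω hω
          rw [Real.norm_eq_abs, abs_of_pos (lt_of_lt_of_le hε hω.1)]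
          exact le_of_lt hω.2)
  have int_πμ0 : Integrable (fun ω => πA (X ω) * μ0Δ (X ω)) P :=
    hintμ0.bdd_mul (c := 1) (hπmeas.comp hXmeas).aestronglyMeasurable
      (by filter_upwards [hπbd] with ω hω
          rw [Real.norm_eq_abs, abs_of_pos (lt_of_lt_of_le hε hω.1)]
          exact le_of_lt hω.2)
  -- conversions of set integrals
  have conv1 : ∫ ω in {ω | A ω = 1}, μ0Δ (X ω) ∂P = ∫ ω, A ω * μ0Δ (X ω) ∂P := by
    rw [← integral_indicator hA1s]
    refine integral_congr_ae (Filter.Eventually.of_forall fun ω => ?_)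
    beta_reduce
    rcases hA01 ω with h | h
    · rw [Set.indicator_of_notMem
        (show ω ∉ {ω' | A ω' = 1} by simp [Set.mem_setOf_eq, h]), h, zero_mul]
    · rw [Set.indicator_of_mem (show ω ∈ {ω' | A ω' = 1} from h), h, one_mul]
  have conv2 : ∫ ω in {ω | A ω = 1}, (μ0Δ (X ω) - μb (X ω)) *
        ((πb (X ω) / (1 - πb (X ω))) / (πA (X ω) / (1 - πA (X ω))) - 1) ∂P
      = ∫ ω, A ω * ((μ0Δ (X ω) - μb (X ω)) *
        ((πb (X ω) / (1 - πb (X ω))) / (πA (X ω) / (1 - πA (X ω))) - 1)) ∂P := by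
    rw [← integral_indicator hA1s]
    refine integral_congr_ae (Filter.Eventually.of_forall fun ω => ?_)
    beta_reduce
    rcases hA01 ω with h | h
    · rw [Set.indicator_of_notMem
        (show ω ∉ {ω' | A ω' = 1} by simp [Set.mem_setOf_eq, h]), h, zero_mul]
    · rw [Set.indicator_of_mem (show ω ∈ {ω' | A ω' = 1} from h), h, one_mul]
  -- assembling the identities
  have E3 : ∫ ω, πA (X ω) * ((μ0Δ (X ω) - μb (X ω)) *
        ((πb (X ω) / (1 - πb (X ω))) / (πA (X ω) / (1 - πA (X ω))) - 1)) ∂P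
      = ∫ ω, πA (X ω) * ((μ0Δ (X ω) - μb (X ω)) *
        ((πb (X ω) / (1 - πb (X ω))) / (πA (X ω) / (1 - πA (X ω))))) ∂P
        - ∫ ω, πA (X ω) * (μ0Δ (X ω) - μb (X ω)) ∂P := by
    rw [← integral_sub int_πu int_πm]
    refine integral_congr_ae (Filter.Eventually.of_forall fun ω => ?_)
    simp only [Pi.sub_apply]; ring
  have E4 : ∫ ω, πA (X ω) * μ0Δ (X ω) ∂P - ∫ ω, πA (X ω) * (μ0Δ (X ω) - μb (X ω)) ∂P
      = ∫ ω, πA (X ω) * μb (X ω) ∂P := by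
    rw [← integral_sub int_πμ0 int_πm]
    refine integral_congr_ae (Filter.Eventually.of_forall fun ω => ?_)
    simp only [Pi.sub_apply]; ring
  -- LHS decomposition
  have L1 : ∫ ω, (A ω / c * μb (X ω)
        + (1 - A ω) / c * (πb (X ω) / (1 - πb (X ω))) * (Y1 ω - Y0 ω - μb (X ω))) ∂P
      = c⁻¹ * (∫ ω, A ω * μb (X ω) ∂P
        + ∫ ω, (1 - A ω) * (πb (X ω) / (1 - πb (X ω))) * (Y1 ω - Y0 ω - μb (X ω)) ∂P) := by
    rw [← integral_add int_Aμb int_h1, ← integral_const_mul]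
    refine integral_congr_ae (Filter.Eventually.of_forall fun ω => ?_)
    simp only [Pi.add_apply]
    ring
  rw [L1, ← add_div, div_eq_inv_mul]
  congr 1
  rw [conv1, conv2, S_μ0, S_v, S_D, S_A, S_B, S_C, E3, E4.symm]
  ring
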